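/- Over the rationals, the formal power series G(X) = (1+X)·(1−(−X)^m)^{−1/m} (for an integer m ≥ 2) satisfies the differential equation (1−(−X)^m)·G'(X) = ((1−(−X)^{m−1})/(1+X))·G(X) with G(0) = 1, and its logarithm equals log(1+X) − (1/m)·log(1−(−X)^m) = Σ_{k ≥ 1, m ∤ k} ((−1)^{k+1}/k)·X^k. -/

import Mathlib

open PowerSeries

private lemma coeff_neg_X_pow (n k : ℕ) :
    coeff n ((-(X : PowerSeries ℚ)) ^ k) = if n = k then (-1 : ℚ) ^ k else 0 := by
  rw [neg_pow, show ((-1 : PowerSeries ℚ) ^ k) = C ((-1 : ℚ) ^ k) by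
    rw [map_pow, map_neg, map_one], coeff_C_mul, coeff_X_pow]
  split_ifs <;> ring

private lemma aux_pow (m : ℕ) (hm : 1 ≤ m) :
    (1 - (-(X : PowerSeries ℚ)) ^ m) - (1 + X) * (-(X : PowerSeries ℚ)) ^ (m - 1)
      = 1 - (-(X : PowerSeries ℚ)) ^ (m - 1) := by
  have h : (-(X : PowerSeries ℚ)) ^ (m - 1) * (-X) = (-X) ^ m := by
    rw [← pow_succ]; congr 1; omega
  linear_combination h

private lemma hA_lem : (PowerSeries.mk fun n => (-1 : ℚ) ^ n) * (1 + X) = 1 := by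
  ext n
  rw [mul_add, mul_one, map_add]
  cases n with
  | zero => simp
  | succ n => simp [PowerSeries.coeff_succ_mul_X, pow_succ]

private lemma hB_lem (m : ℕ) (hm : 1 ≤ m) :
    (PowerSeries.mk fun n => if m ∣ n + 1 then (-1 : ℚ) ^ n else 0)
        * (1 - (-(X : PowerSeries ℚ)) ^ m) = (-(X : PowerSeries ℚ)) ^ (m - 1) := by
  set f : PowerSeries ℚ := PowerSeries.mk fun n => if m ∣ n + 1 then (-1 : ℚ) ^ n else 0 with hf
  have hC : (-(X : PowerSeries ℚ)) ^ m = C ((-1 : ℚ) ^ m) * X ^ m := by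
    rw [neg_pow]; congr 1; rw [map_pow, map_neg, map_one]
  ext n
  have hre : f * (1 - (-(X : PowerSeries ℚ)) ^ m)
      = f - C ((-1 : ℚ) ^ m) * (f * X ^ m) := by rw [hC]; ring
  rw [hre, map_sub, coeff_C_mul, PowerSeries.coeff_mul_X_pow', coeff_neg_X_pow, hf, coeff_mk]
  by_cases h1 : m ≤ n
  · have hne : ¬ n = m - 1 := by omega
    rw [if_neg hne, if_pos h1, coeff_mk]
    by_cases h2 : m ∣ n + 1
    · have h3 : m ∣ n - m + 1 := by
        rw [show n - m + 1 = n + 1 - m by omega]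
        exact Nat.dvd_sub h2 dvd_rfl
      rw [if_pos h2, if_pos h3, ← pow_add, show m + (n - m) = n by omega, sub_self]
    · have h3 : ¬ m ∣ n - m + 1 := by
        intro h
        exact h2 (by rw [show n + 1 = (n - m + 1) + m by omega]; exact Nat.dvd_add h dvd_rfl)
      rw [if_neg h2, if_neg h3]; ring
  · rw [if_neg h1]
    by_cases h2 : n = m - 1
    · subst h2
      have : m ∣ m - 1 + 1 := by rw [Nat.sub_add_cancel hm]
      rw [if_pos this, if_pos rfl]; ring
    · have h3 : ¬ m ∣ n + 1 := by
        intro h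
        have := Nat.le_of_dvd (by omega) h
        omega
      rw [if_neg h3, if_neg h2]; ring

private lemma dpow_lem (m : ℕ) (hm : 1 ≤ m) :
    derivative ℚ (1 - (-(X : PowerSeries ℚ)) ^ m)
      = C (m : ℚ) * (-(X : PowerSeries ℚ)) ^ (m - 1) := by
  rw [map_sub, Derivation.map_one_eq_zero, Derivation.leibniz_pow, map_neg, derivative_X]
  rw [smul_eq_mul, nsmul_eq_mul,
    show ((m : PowerSeries ℚ)) = C (m : ℚ) from (map_natCast C m).symm]
  ring

theorem generating_series_ODE_and_log (m : ℕ) (hm : 2 ≤ m)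
    (H : PowerSeries ℚ)
    (hH0 : constantCoeff H = 1)
    (hHm : H ^ m * (1 - (-(X : PowerSeries ℚ)) ^ m) = 1)
    (G : PowerSeries ℚ) (hG : G = (1 + X) * H)
    (L : PowerSeries ℚ)
    (hL : L = PowerSeries.mk fun n : ℕ =>
      if n = 0 ∨ m ∣ n then 0 else (-1 : ℚ) ^ (n + 1) / (n : ℚ)) :
    constantCoeff G = 1 ∧
    (1 + X) * ((1 - (-(X : PowerSeries ℚ)) ^ m) * derivative ℚ G)
      = (1 - (-(X : PowerSeries ℚ)) ^ (m - 1)) * G ∧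
    (constantCoeff L = 0 ∧ derivative ℚ L * G = derivative ℚ G) ∧
    (∀ L₁ L₂ : PowerSeries ℚ,
      constantCoeff L₁ = 0 → constantCoeff L₂ = 0 →
      derivative ℚ L₁ * (1 + X) = derivative ℚ (1 + (X : PowerSeries ℚ)) →
      derivative ℚ L₂ * (1 - (-(X : PowerSeries ℚ)) ^ m)
        = derivative ℚ (1 - (-(X : PowerSeries ℚ)) ^ m) →
      L = L₁ - C (1 / (m : ℚ)) * L₂) := by
  have hm1 : 1 ≤ m := by omega
  have hm0 : m ≠ 0 := by omega
  have hmQ : (m : ℚ) ≠ 0 := Nat.cast_ne_zero.2 hm0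
  set Y : PowerSeries ℚ := (-(X : PowerSeries ℚ)) ^ m with hY
  set Z : PowerSeries ℚ := (-(X : PowerSeries ℚ)) ^ (m - 1) with hZ
  have haux : (1 - Y) - (1 + X) * Z = 1 - Z := aux_pow m hm1
  -- nonzero facts
  have hne1 : (1 + X : PowerSeries ℚ) ≠ 0 := by
    intro h
    have := congrArg (constantCoeff) h
    simp at this
  have hneY : (1 - Y : PowerSeries ℚ) ≠ 0 := by
    intro h
    have := congrArg (constantCoeff) h
    simp [hY, hm0] at this
  have hHne : H ≠ 0 := by
    intro h; rw [h] at hH0; simp at hH0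
  -- derivative of 1 + X
  have hd1X : derivative ℚ (1 + X : PowerSeries ℚ) = 1 := by
    rw [map_add, Derivation.map_one_eq_zero, derivative_X, zero_add]
  have hdY : derivative ℚ (1 - Y) = C (m : ℚ) * Z := dpow_lem m hm1
  -- derivative of H relation
  have hd0 := congrArg (derivative ℚ) hHm
  rw [Derivation.leibniz, Derivation.leibniz_pow, Derivation.map_one_eq_zero, hdY,
    smul_eq_mul, smul_eq_mul, smul_eq_mul, nsmul_eq_mul] at hd0
  have hCm : ((m : PowerSeries ℚ)) = C (m : ℚ) := (map_natCast C m).symm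
  have hpow : H ^ m = H ^ (m - 1) * H := by rw [← pow_succ]; congr 1; omega
  have hfac : ((m : PowerSeries ℚ) * H ^ (m - 1))
      * ((1 - Y) * derivative ℚ H + H * Z) = 0 := by
    linear_combination hd0 + Z * H ^ (m - 1) * H * hCm - C (m : ℚ) * Z * hpow
  have hmPSne : ((m : PowerSeries ℚ)) * H ^ (m - 1) ≠ 0 :=
    mul_ne_zero (by rw [hCm]; exact fun h => hmQ (by simpa using congrArg (constantCoeff) h))
      (pow_ne_zero _ hHne)
  have hdH : (1 - Y) * derivative ℚ H = -(H * Z) := by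
    have := (mul_eq_zero.mp hfac).resolve_left hmPSne
    linear_combination this
  -- part 1
  have hG0 : constantCoeff G = 1 := by rw [hG]; simp [hH0]
  have hdG : derivative ℚ G = (1 + X) * derivative ℚ H + H := by
    rw [hG, Derivation.leibniz, smul_eq_mul, smul_eq_mul, hd1X, mul_one]
  -- part 2 (the ODE)
  have hODE : (1 + X) * ((1 - Y) * derivative ℚ G) = (1 - Z) * G := by
    linear_combination (1 + X) * (1 - Y) * hdG + (1 + X) ^ 2 * hdH
      + (1 + X) * H * haux - (1 - Z) * hG
  -- auxiliary series for the logarithm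
  set A : PowerSeries ℚ := PowerSeries.mk fun n => (-1 : ℚ) ^ n with hA'
  set B : PowerSeries ℚ := PowerSeries.mk fun n => if m ∣ n + 1 then (-1 : ℚ) ^ n else 0
    with hB'
  have hA : A * (1 + X) = 1 := hA_lem
  have hB : B * (1 - Y) = Z := hB_lem m hm1
  have hdL : derivative ℚ L = A - B := by
    ext n
    rw [coeff_derivative, hL, coeff_mk, map_sub, hA', hB', coeff_mk, coeff_mk]
    by_cases h : m ∣ n + 1
    · rw [if_pos (Or.inr h), if_pos h]; ring
    · rw [if_neg (by push_neg; exact ⟨n.succ_ne_zero, h⟩), if_neg h]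
      push_cast
      rw [div_mul_cancel₀ _ (by positivity : ((n : ℚ) + 1) ≠ 0), pow_succ, pow_succ]
      ring
  have hKEY : derivative ℚ L * (1 + X) * (1 - Y) = 1 - Z := by
    rw [hdL]; linear_combination (1 - Y) * hA - (1 + X) * hB + haux
  have hL0 : constantCoeff L = 0 := by rw [hL]; simp
  have hLG : derivative ℚ L * G = derivative ℚ G := by
    apply mul_left_cancel₀ (mul_ne_zero hne1 hneY)
    linear_combination G * hKEY - hODE
  refine ⟨hG0, hODE, ⟨hL0, hLG⟩, ?_⟩
  intro L₁ L₂ h10 h20 h1 h2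
  rw [hd1X] at h1
  rw [hdY] at h2
  have hinv : C (1 / (m : ℚ)) * C (m : ℚ) = 1 := by
    rw [← map_mul, one_div, inv_mul_cancel₀ hmQ, map_one]
  refine derivative.ext ?_ ?_
  · rw [map_sub]
    have hdCL2 : derivative ℚ (C (1 / (m : ℚ)) * L₂)
        = C (1 / (m : ℚ)) * derivative ℚ L₂ := by
      rw [Derivation.leibniz, derivative_C, smul_zero, add_zero, smul_eq_mul]
    rw [hdCL2]
    apply mul_left_cancel₀ (mul_ne_zero hne1 hneY)
    linear_combination hKEY - (1 - Y) * h1 + C (1 / (m : ℚ)) * (1 + X) * h2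
      + Z * (1 + X) * hinv - haux
  · simp [hL0, h10, h20]
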